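/- Let n ≥ 2 be an integer and M ≥ 1. Let φ : ℝ → ℝ be twice continuously differentiable with 1 ≤ φ(x) ≤ M and |φ'(x)| ≤ M for all x, and suppose φ − 1 and φ' are square-integrable. Then there exists a constant C > 0 such that: for every differentiable u : ℝ → ℝ with u and u' square-integrable and ‖u‖_{H¹} ≤ 1/2, if N[φ + u] = N[φ], then |∫_ℝ [ (n φ^{2n−1} (φ')² + (φ − 1)) u + φ^{2n} φ' u' ] dx| ≤ C ‖u‖_{H¹}². -/

import Mathlib

open MeasureTheory Set Filter
set_option maxHeartbeats 2000000

/-- The squared `H¹(ℝ)` norm, `‖u‖_{H¹}² = ∫ u² + ∫ (u')²`. -/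
noncomputable def H1normSq (u : ℝ → ℝ) : ℝ :=
  (∫ x : ℝ, (u x) ^ 2) + ∫ x : ℝ, (deriv u x) ^ 2

/-- The `H¹(ℝ)` norm. -/
noncomputable def H1norm (u : ℝ → ℝ) : ℝ := Real.sqrt (H1normSq u)

/-- The generalized momentum `N[ψ] = ∫ (1/2) ψ^{2n} (ψ')² + (1/2)(ψ-1)²`. -/
noncomputable def genMomentum (n : ℕ) (ψ : ℝ → ℝ) : ℝ :=
  ∫ x : ℝ, ((1 / 2) * ψ x ^ (2 * n) * (deriv ψ x) ^ 2 + (1 / 2) * (ψ x - 1) ^ 2)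


lemma pow_diff_le (M : ℝ) (hM : 1 ≤ M) (m : ℕ) {a t : ℝ} (ha1 : 1 ≤ a) (haM : a ≤ M)
    (ht : |t| ≤ 1/2) : |(a+t)^m - a^m| ≤ m * (M+1)^m * |t| := by
  induction m with
  | zero => simp
  | succ m ih =>
    have hat : |a + t| ≤ M + 1 := by
      calc |a+t| ≤ |a| + |t| := abs_add_le a t
        _ ≤ M + 1 := by rw [abs_of_nonneg (by linarith)]; linarith
    have ham : |a^m| ≤ (M+1)^m := by
      rw [abs_of_nonneg (by positivity)]
      exact pow_le_pow_left₀ (by linarith) (by linarith) m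
    have key : (a+t)^(m+1) - a^(m+1) = (a+t) * ((a+t)^m - a^m) + t * a^m := by ring
    have h2 : |(a+t)^(m+1) - a^(m+1)| ≤ |a+t| * |(a+t)^m - a^m| + |t| * |a^m| := by
      rw [key]; exact (abs_add_le _ _).trans (by rw [abs_mul, abs_mul])
    have h3 : |a+t| * |(a+t)^m - a^m| ≤ (M+1) * (m * (M+1)^m * |t|) :=
      mul_le_mul hat ih (abs_nonneg _) (by linarith)
    have h4 : |t| * |a^m| ≤ |t| * (M+1)^m :=
      mul_le_mul_of_nonneg_left ham (abs_nonneg t)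
    have h5 : (M+1) * (m * (M+1)^m * |t|) + |t| * (M+1)^m
        ≤ (↑(m+1)) * (M+1)^(m+1) * |t| := by
      push_cast
      have hP0 : (0:ℝ) ≤ (M+1)^m := by positivity
      rw [pow_succ]
      nlinarith [abs_nonneg t, mul_nonneg hP0 (abs_nonneg t),
        mul_nonneg (mul_nonneg hP0 (abs_nonneg t)) (Nat.cast_nonneg m : (0:ℝ) ≤ m)]
    linarith

lemma pow_taylor_le (M : ℝ) (hM : 1 ≤ M) (m : ℕ) {a t : ℝ} (ha1 : 1 ≤ a) (haM : a ≤ M)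
    (ht : |t| ≤ 1/2) :
    |(a+t)^(m+1) - a^(m+1) - (↑(m+1)) * a^m * t| ≤ ((↑(m+1)):ℝ)^2 * (M+1)^(m+1) * t^2 := by
  induction m with
  | zero =>
    have h0 : (a + t) ^ (0+1) - a ^ (0+1) - ((0+1 : ℕ) : ℝ) * a ^ 0 * t = 0 := by
      push_cast; ring
    rw [h0, abs_zero]; positivity
  | succ m ih =>
    have hat : |a + t| ≤ M + 1 := by
      calc |a+t| ≤ |a| + |t| := abs_add_le a t
        _ ≤ M + 1 := by rw [abs_of_nonneg (by linarith)]; linarith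
    have ham : |a^m| ≤ (M+1)^m := by
      rw [abs_of_nonneg (by positivity)]
      exact pow_le_pow_left₀ (by linarith) (by linarith) m
    have key : (a+t)^(m+1+1) - a^(m+1+1) - (↑(m+1+1):ℝ) * a^(m+1) * t
        = (a+t) * ((a+t)^(m+1) - a^(m+1) - (↑(m+1):ℝ) * a^m * t) + (↑(m+1):ℝ) * a^m * t^2 := by
      push_cast; ring
    have h2 : |(a+t)^(m+1+1) - a^(m+1+1) - (↑(m+1+1):ℝ) * a^(m+1) * t|
        ≤ |a+t| * |(a+t)^(m+1) - a^(m+1) - (↑(m+1):ℝ) * a^m * t| + (↑(m+1):ℝ) * |a^m| * t^2 := by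
      rw [key]
      refine (abs_add_le _ _).trans ?_
      rw [abs_mul, abs_mul, abs_mul, abs_of_nonneg (by positivity : (0:ℝ) ≤ (↑(m+1):ℝ)),
        abs_of_nonneg (sq_nonneg t)]
    have h3 : |a+t| * |(a+t)^(m+1) - a^(m+1) - (↑(m+1):ℝ) * a^m * t|
        ≤ (M+1) * (((↑(m+1)):ℝ)^2 * (M+1)^(m+1) * t^2) :=
      mul_le_mul hat ih (abs_nonneg _) (by linarith)
    have h4 : (↑(m+1):ℝ) * |a^m| * t^2 ≤ (↑(m+1):ℝ) * (M+1)^m * t^2 := by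
      have := mul_le_mul_of_nonneg_left ham (by positivity : (0:ℝ) ≤ (↑(m+1):ℝ))
      exact mul_le_mul_of_nonneg_right this (sq_nonneg t)
    have h5 : (M+1) * (((↑(m+1)):ℝ)^2 * (M+1)^(m+1) * t^2) + (↑(m+1):ℝ) * (M+1)^m * t^2
        ≤ ((↑(m+1+1)):ℝ)^2 * (M+1)^(m+1+1) * t^2 := by
      have hP0 : (0:ℝ) ≤ (M+1)^m := by positivity
      have hP1 : (1:ℝ) ≤ (M+1)^m := one_le_pow₀ (by linarith)
      have hq0 : (0:ℝ) ≤ (m:ℝ) := Nat.cast_nonneg m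
      have e1 : (M+1)^(m+1) = (M+1)^m*(M+1) := pow_succ _ _
      have e2 : (M+1)^(m+1+1) = (M+1)^m*(M+1)*(M+1) := by rw [pow_succ, e1]
      have hkey : (0:ℝ) ≤ (M+1)^2*(2*(m:ℝ)+3) - ((m:ℝ)+1) := by
        have h4' : (4:ℝ) ≤ (M+1)^2 := by nlinarith
        nlinarith [mul_nonneg (sub_nonneg.2 h4') (by linarith : (0:ℝ) ≤ 2*(m:ℝ)+3)]
      rw [e1, e2]
      push_cast
      nlinarith [mul_nonneg (mul_nonneg hP0 (sq_nonneg t)) hkey]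
    linarith

lemma sup_sq_le (u : ℝ → ℝ) (hu : Differentiable ℝ u)
    (h2 : Integrable (fun x => (u x)^2)) (h2' : Integrable (fun x => (deriv u x)^2)) (x : ℝ) :
    u x ^ 2 ≤ (∫ y : ℝ, (u y)^2) + ∫ y : ℝ, (deriv u y)^2 := by
  set w : ℝ → ℝ := fun y => 2 * u y * deriv u y with hwdef
  have hwabs : ∀ y, |w y| ≤ (u y)^2 + (deriv u y)^2 := by
    intro y
    have h := two_mul_le_add_sq |u y| |deriv u y|
    calc |w y| = 2 * |u y| * |deriv u y| := by
          rw [hwdef]; simp [abs_mul]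
      _ ≤ |u y|^2 + |deriv u y|^2 := h
      _ = (u y)^2 + (deriv u y)^2 := by rw [sq_abs, sq_abs]
  have hwmeas : AEStronglyMeasurable w volume := by
    refine (Measurable.aestronglyMeasurable ?_)
    exact ((hu.continuous.measurable.const_mul 2).mul (measurable_deriv u))
  have hwint : Integrable w := by
    refine (h2.add h2').mono' hwmeas ?_
    filter_upwards with y
    rw [Real.norm_eq_abs]
    exact hwabs y
  have hderiv : ∀ y, HasDerivAt (fun z => u z ^ 2) (w y) y := by
    intro y
    refine (((hu y).hasDerivAt).pow 2 : HasDerivAt (fun z => u z ^ 2) _ y).congr_deriv ?_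
    simp [hwdef, mul_comm]
  have hftc : ∀ a b : ℝ, ∫ y in a..b, w y = u b ^ 2 - u a ^ 2 := fun a b =>
    intervalIntegral.integral_eq_sub_of_hasDerivAt (fun y _ => hderiv y)
      hwint.intervalIntegrable
  have hT : ∀ a : ℝ, Tendsto (fun b => u b ^ 2) atTop
      (nhds (u a ^ 2 + ∫ y in Set.Ioi a, w y)) := by
    intro a
    have h1 : Tendsto (fun b => ∫ y in a..b, w y) atTop (nhds (∫ y in Set.Ioi a, w y)) :=
      intervalIntegral_tendsto_integral_Ioi a hwint.integrableOn tendsto_id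
    have h2 : (fun b => u b ^ 2) = fun b => u a ^ 2 + ∫ y in a..b, w y := by
      funext b; rw [hftc a b]; ring
    rw [h2]
    exact tendsto_const_nhds.add h1
  set L : ℝ := u 0 ^ 2 + ∫ y in Set.Ioi (0:ℝ), w y with hLdef
  have hL0 : 0 ≤ L := ge_of_tendsto (hT 0) (Eventually.of_forall fun b => sq_nonneg _)
  have hLzero : L = 0 := by
    by_contra hne
    have hLpos : 0 < L := lt_of_le_of_ne hL0 (Ne.symm hne)
    have hev : ∀ᶠ b in atTop, u b ^ 2 ∈ Set.Ioi (L/2) :=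
      (hT 0).eventually (IsOpen.mem_nhds isOpen_Ioi (show L/2 < L from half_lt_self hLpos))
    obtain ⟨a, ha⟩ := eventually_atTop.1 hev
    have hconst : Integrable (fun _ : ℝ => L/2) (volume.restrict (Set.Ici a)) := by
      refine (h2.restrict (s := Set.Ici a)).mono' aestronglyMeasurable_const ?_
      rw [ae_restrict_iff' measurableSet_Ici]
      filter_upwards with y hy
      rw [Real.norm_eq_abs, abs_of_pos (half_pos hLpos)]
      exact le_of_lt (ha y hy)
    rw [integrable_const_iff] at hconst
    rcases hconst with h | h
    · linarith
    · have h := measure_lt_top (volume.restrict (Set.Ici a)) Set.univ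
      rw [Measure.restrict_apply_univ, Real.volume_Ici] at h
      exact (lt_irrefl _ h).elim
  have hux : u x ^ 2 = - ∫ y in Set.Ioi x, w y := by
    have := tendsto_nhds_unique (hT x) (hT 0)
    rw [← hLdef] at this
    rw [hLzero] at this
    linarith
  rw [hux]
  calc - ∫ y in Set.Ioi x, w y ≤ |∫ y in Set.Ioi x, w y| := neg_le_abs _
    _ ≤ ∫ y in Set.Ioi x, |w y| := by
        simpa [Real.norm_eq_abs] using
          norm_integral_le_integral_norm (μ := volume.restrict (Set.Ioi x)) w
    _ ≤ ∫ y : ℝ, |w y| := by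
        refine setIntegral_le_integral hwint.abs ?_
        filter_upwards with y using abs_nonneg _
    _ ≤ ∫ y : ℝ, ((u y)^2 + (deriv u y)^2) := by
        refine integral_mono hwint.abs (h2.add h2') ?_
        intro y; exact hwabs y
    _ = (∫ y : ℝ, (u y)^2) + ∫ y : ℝ, (deriv u y)^2 := integral_add h2 h2'

/-- If `φ` is `C²`, bounded with bounded derivative, `φ - 1` and `φ'`
square-integrable, then there is `C > 0` such that every `H¹` perturbation `u` with
`‖u‖_{H¹} ≤ 1/2` preserving `N` is nearly orthogonal (to quadratic order) to the
gradient of `N` at `φ`. -/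
theorem stmt_5 (n : ℕ) (hn : 2 ≤ n) (M : ℝ) (hM : 1 ≤ M)
    (φ : ℝ → ℝ) (hreg : ContDiff ℝ 2 φ)
    (hφ1 : ∀ x, 1 ≤ φ x) (hφM : ∀ x, φ x ≤ M) (hφ' : ∀ x, |deriv φ x| ≤ M)
    (hint1 : Integrable (fun x => (φ x - 1) ^ 2))
    (hint2 : Integrable (fun x => (deriv φ x) ^ 2)) :
    ∃ C : ℝ, 0 < C ∧
      ∀ u : ℝ → ℝ, Differentiable ℝ u →
        Integrable (fun x => (u x) ^ 2) → Integrable (fun x => (deriv u x) ^ 2) →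
        H1norm u ≤ 1 / 2 →
        genMomentum n (fun x => φ x + u x) = genMomentum n φ →
        |∫ x : ℝ, ((n * φ x ^ (2 * n - 1) * (deriv φ x) ^ 2 + (φ x - 1)) * u x
            + φ x ^ (2 * n) * deriv φ x * deriv u x)| ≤ C * (H1norm u) ^ 2 := by
  have hφd : Differentiable ℝ φ := hreg.differentiable (by norm_num)
  have hφc : Continuous φ := hreg.continuous
  have hφ'c : Continuous (deriv φ) := hreg.continuous_deriv one_le_two
  set K : ℝ := (M+1)^(2*n) with hKdef
  have hK1 : (1:ℝ) ≤ K := one_le_pow₀ (by linarith)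
  have hK0 : (0:ℝ) ≤ K := by linarith
  obtain ⟨k, hk⟩ : ∃ k, 2*n = k + 1 := ⟨2*n-1, by omega⟩
  have hk' : 2*n - 1 = k := by omega
  have hM0 : (0:ℝ) ≤ M := by linarith
  set C0 : ℝ := (2*(n:ℝ))^2 * K * M^2 + 2*(n:ℝ)*M*K + K + 1 with hC0def
  have hN0 : (2:ℝ) ≤ (n:ℝ) := by exact_mod_cast hn
  refine ⟨C0, by positivity, ?_⟩
  intro u hu hu2 hu2' hH1 hN
  have huc : Continuous u := hu.continuous
  -- basic H1 facts
  have hS0 : 0 ≤ H1normSq u :=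
    add_nonneg (integral_nonneg fun x => sq_nonneg _) (integral_nonneg fun x => sq_nonneg _)
  have hnorm : H1norm u ^ 2 = H1normSq u := Real.sq_sqrt hS0
  have hsup : ∀ x, u x ^ 2 ≤ H1normSq u := fun x => sup_sq_le u hu hu2 hu2' x
  have hSle : H1normSq u ≤ 1/4 := by
    have h0 : 0 ≤ H1norm u := Real.sqrt_nonneg _
    have h := pow_le_pow_left₀ h0 hH1 2
    rw [hnorm] at h
    nlinarith
  have huhalf : ∀ x, |u x| ≤ 1/2 := by
    intro x
    have h1 : u x ^ 2 ≤ (1/2)^2 := by have := hsup x; nlinarith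
    have h2 := Real.sqrt_le_sqrt h1
    rw [Real.sqrt_sq_eq_abs, Real.sqrt_sq (by norm_num : (0:ℝ) ≤ 1/2)] at h2
    exact h2
  -- pointwise facts
  have hφu_lb : ∀ x, (1:ℝ)/2 ≤ φ x + u x := fun x => by
    have h := (abs_le.1 (huhalf x)).1; have := hφ1 x; linarith
  have hφu_ub : ∀ x, φ x + u x ≤ M + 1 := fun x => by
    have h := (abs_le.1 (huhalf x)).2; have := hφM x; linarith
  have hφupow : ∀ x, (φ x + u x)^(2*n) ≤ K :=
    fun x => pow_le_pow_left₀ (by linarith [hφu_lb x]) (hφu_ub x) _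
  have hφupow0 : ∀ x, 0 ≤ (φ x + u x)^(2*n) :=
    fun x => pow_nonneg (by linarith [hφu_lb x]) _
  have hφpow0 : ∀ x, 0 ≤ φ x ^ (2*n) := fun x => pow_nonneg (by linarith [hφ1 x]) _
  have hφpowK : ∀ x, φ x ^ (2*n) ≤ K :=
    fun x => pow_le_pow_left₀ (by linarith [hφ1 x]) (by linarith [hφM x]) _
  have hφpowk0 : ∀ x, 0 ≤ φ x ^ (2*n-1) := fun x => pow_nonneg (by linarith [hφ1 x]) _
  have hφpowkK : ∀ x, φ x ^ (2*n-1) ≤ K := fun x => by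
    calc φ x ^ (2*n-1) ≤ (M+1)^(2*n-1) :=
          pow_le_pow_left₀ (by linarith [hφ1 x]) (by linarith [hφM x]) _
      _ ≤ (M+1)^(2*n) := pow_le_pow_right₀ (by linarith) (by omega)
  have hφ'sq : ∀ x, (deriv φ x)^2 ≤ M^2 := fun x => by
    have h := hφ' x
    nlinarith [abs_nonneg (deriv φ x), sq_abs (deriv φ x)]
  -- integrability of the various integrands
  have hmu' : Measurable (deriv u) := measurable_deriv u
  have hmφ' : Measurable (deriv φ) := hφ'c.measurable
  have hmu : Measurable u := huc.measurable
  have hmφ : Measurable φ := hφc.measurable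
  have hbF : Integrable (fun x => K * ((deriv φ x)^2 + (deriv u x)^2)
      + ((φ x - 1)^2 + (u x)^2)) := by
    exact ((hint2.add hu2').const_mul K).add (hint1.add hu2)
  have hF_int : Integrable (fun x => (1/2) * (φ x + u x)^(2*n) * (deriv φ x + deriv u x)^2
      + (1/2) * (φ x + u x - 1)^2) := by
    refine hbF.mono' (Measurable.aestronglyMeasurable (by fun_prop)) ?_
    filter_upwards with x
    beta_reduce
    rw [Real.norm_eq_abs]
    have hp0 := hφupow0 x
    have hpK := hφupow x
    have hnn : 0 ≤ (1/2) * (φ x + u x)^(2*n) * (deriv φ x + deriv u x)^2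
        + (1/2) * (φ x + u x - 1)^2 := by
      have h := mul_nonneg (mul_nonneg (by norm_num : (0:ℝ) ≤ 1/2) hp0)
        (sq_nonneg (deriv φ x + deriv u x))
      nlinarith [sq_nonneg (φ x + u x - 1)]
    rw [abs_of_nonneg hnn]
    have hx1 : (1/2) * (φ x + u x)^(2*n) * (deriv φ x + deriv u x)^2
        ≤ (1/2) * K * (deriv φ x + deriv u x)^2 := by
      nlinarith [mul_le_mul_of_nonneg_right hpK (sq_nonneg (deriv φ x + deriv u x))]
    have hx2 : (1/2) * K * (deriv φ x + deriv u x)^2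
        ≤ K * ((deriv φ x)^2 + (deriv u x)^2) := by
      nlinarith [mul_nonneg hK0 (sq_nonneg (deriv φ x - deriv u x))]
    have hx3 : (1/2) * (φ x + u x - 1)^2 ≤ (φ x - 1)^2 + (u x)^2 := by
      nlinarith [sq_nonneg (φ x - 1 - u x)]
    linarith
  have hbG : Integrable (fun x => K * (deriv φ x)^2 + (φ x - 1)^2) := by
    exact (hint2.const_mul K).add hint1
  have hG_int : Integrable (fun x => (1/2) * φ x ^ (2*n) * (deriv φ x)^2
      + (1/2) * (φ x - 1)^2) := by
    refine hbG.mono' (Measurable.aestronglyMeasurable (by fun_prop)) ?_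
    filter_upwards with x
    beta_reduce
    rw [Real.norm_eq_abs]
    have hp0 := hφpow0 x
    have hpK := hφpowK x
    set P := φ x ^ (2*n) with hPd
    set p := deriv φ x with hpd
    have hnn : 0 ≤ (1/2) * P * p^2 + (1/2) * (φ x - 1)^2 := by
      nlinarith [mul_nonneg hp0 (sq_nonneg p), sq_nonneg (φ x - 1)]
    rw [abs_of_nonneg hnn]
    nlinarith [mul_le_mul_of_nonneg_right hpK (sq_nonneg p), sq_nonneg (φ x - 1)]
  have hbt1 : Integrable (fun x => (n:ℝ) * K * (deriv φ x)^2) := by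
    have := hint2.const_mul ((n:ℝ) * K)
    exact this.congr (Eventually.of_forall fun x => by ring)
  have ht1 : Integrable (fun x => (n:ℝ) * φ x ^ (2*n-1) * (deriv φ x)^2 * u x) := by
    refine hbt1.mono' (Measurable.aestronglyMeasurable (by fun_prop)) ?_
    filter_upwards with x
    beta_reduce
    rw [Real.norm_eq_abs, abs_mul]
    have h0 : 0 ≤ (n:ℝ) * φ x ^ (2*n-1) * (deriv φ x)^2 :=
      mul_nonneg (mul_nonneg (Nat.cast_nonneg n) (hφpowk0 x)) (sq_nonneg _)
    rw [abs_of_nonneg h0]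
    have hd1 : |u x| ≤ 1 := le_trans (huhalf x) (by norm_num)
    calc (n:ℝ) * φ x ^ (2*n-1) * (deriv φ x)^2 * |u x|
        ≤ (n:ℝ) * φ x ^ (2*n-1) * (deriv φ x)^2 * 1 :=
          mul_le_mul_of_nonneg_left hd1 h0
      _ = (n:ℝ) * φ x ^ (2*n-1) * (deriv φ x)^2 := by ring
      _ ≤ (n:ℝ) * K * (deriv φ x)^2 := by
          refine mul_le_mul_of_nonneg_right ?_ (sq_nonneg _)
          exact mul_le_mul_of_nonneg_left (hφpowkK x) (Nat.cast_nonneg n)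
  have hbt2 : Integrable (fun x => (φ x - 1)^2 + (u x)^2) := hint1.add hu2
  have ht2 : Integrable (fun x => (φ x - 1) * u x) := by
    refine hbt2.mono' (Measurable.aestronglyMeasurable (by fun_prop)) ?_
    filter_upwards with x
    beta_reduce
    rw [Real.norm_eq_abs, abs_mul]
    have h := two_mul_le_add_sq |φ x - 1| |u x|
    nlinarith [sq_abs (φ x - 1), sq_abs (u x), abs_nonneg (φ x - 1), abs_nonneg (u x)]
  have hbt3 : Integrable (fun x => K * ((deriv φ x)^2 + (deriv u x)^2)) :=
    (hint2.add hu2').const_mul K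
  have ht3 : Integrable (fun x => φ x ^ (2*n) * deriv φ x * deriv u x) := by
    refine hbt3.mono' (Measurable.aestronglyMeasurable (by fun_prop)) ?_
    filter_upwards with x
    beta_reduce
    rw [Real.norm_eq_abs, abs_mul, abs_mul]
    have h0 := hφpow0 x
    have hpK := hφpowK x
    rw [abs_of_nonneg h0]
    have h : 2 * (|deriv φ x| * |deriv u x|) ≤ (deriv φ x)^2 + (deriv u x)^2 := by
      have := two_mul_le_add_sq |deriv φ x| |deriv u x|
      nlinarith [sq_abs (deriv φ x), sq_abs (deriv u x)]
    have h1 : φ x ^ (2*n) * |deriv φ x| * |deriv u x| ≤ K * (|deriv φ x| * |deriv u x|) := by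
      have := mul_le_mul_of_nonneg_right hpK
        (mul_nonneg (abs_nonneg (deriv φ x)) (abs_nonneg (deriv u x)))
      nlinarith [this]
    have h2 := mul_le_mul_of_nonneg_left h hK0
    nlinarith [h1, h2, mul_nonneg hK0 (add_nonneg (sq_nonneg (deriv φ x)) (sq_nonneg (deriv u x)))]
  have hl_int : Integrable (fun x => ((n:ℝ) * φ x ^ (2*n-1) * (deriv φ x)^2 + (φ x - 1)) * u x
      + φ x ^ (2*n) * deriv φ x * deriv u x) :=
    ((ht1.add ht2).add ht3).congr (Eventually.of_forall fun x => by simp only [Pi.add_apply]; ring)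
  have hr_int : Integrable (fun x =>
      ((1/2) * (φ x + u x)^(2*n) * (deriv φ x + deriv u x)^2 + (1/2) * (φ x + u x - 1)^2)
      - ((1/2) * φ x ^ (2*n) * (deriv φ x)^2 + (1/2) * (φ x - 1)^2)
      - (((n:ℝ) * φ x ^ (2*n-1) * (deriv φ x)^2 + (φ x - 1)) * u x
          + φ x ^ (2*n) * deriv φ x * deriv u x)) :=
    (hF_int.sub hG_int).sub hl_int
  -- the pointwise quadratic bound on the remainder
  have hcast : ((k:ℝ) + 1) = 2*(n:ℝ) := by
    have h : ((2*n : ℕ) : ℝ) = ((k+1 : ℕ) : ℝ) := by rw [hk]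
    push_cast at h
    linarith
  have hrbound : ∀ x,
      |((1/2) * (φ x + u x)^(2*n) * (deriv φ x + deriv u x)^2 + (1/2) * (φ x + u x - 1)^2)
      - ((1/2) * φ x ^ (2*n) * (deriv φ x)^2 + (1/2) * (φ x - 1)^2)
      - (((n:ℝ) * φ x ^ (2*n-1) * (deriv φ x)^2 + (φ x - 1)) * u x
          + φ x ^ (2*n) * deriv φ x * deriv u x)|
      ≤ C0 * ((u x)^2 + (deriv u x)^2) := by
    intro x
    have hE := pow_taylor_le M hM k (hφ1 x) (hφM x) (huhalf x)
    have hD := pow_diff_le M hM (2*n) (hφ1 x) (hφM x) (huhalf x)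
    set a := φ x with ha
    set t := u x with ht
    set p := deriv φ x with hp
    set q := deriv u x with hq
    have hKk : K = (M+1)^(k+1) := by rw [hKdef, hk]
    have hE' : |(a+t)^(k+1) - a^(k+1) - ((k:ℝ)+1) * a^k * t| ≤ (2*(n:ℝ))^2 * K * t^2 := by
      push_cast at hE
      rw [hKk, ← hcast]
      exact hE
    have hD' : |(a+t)^(k+1) - a^(k+1)| ≤ 2*(n:ℝ) * K * |t| := by
      rw [hk] at hD
      push_cast at hD
      rw [hKk, ← hcast]
      exact hD
    have hn' : (n:ℝ) = ((k:ℝ)+1)/2 := by linarith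
    have hid : ((1/2) * (a + t)^(2*n) * (p + q)^2 + (1/2) * (a + t - 1)^2)
        - ((1/2) * a ^ (2*n) * p^2 + (1/2) * (a - 1)^2)
        - (((n:ℝ) * a ^ (2*n-1) * p^2 + (a - 1)) * t + a ^ (2*n) * p * q)
        = (1/2) * p^2 * ((a+t)^(k+1) - a^(k+1) - ((k:ℝ)+1) * a^k * t)
          + p * q * ((a+t)^(k+1) - a^(k+1))
          + (1/2) * (a+t)^(k+1) * q^2 + (1/2) * t^2 := by
      rw [hk', hk, hn']
      ring
    rw [hid]
    set E := (a+t)^(k+1) - a^(k+1) - ((k:ℝ)+1) * a^k * t with hEd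
    set D := (a+t)^(k+1) - a^(k+1) with hDd
    have hpsq : p^2 ≤ M^2 := hφ'sq x
    have hpowub : (a+t)^(k+1) ≤ K := by rw [← hk]; exact hφupow x
    have hpow0 : 0 ≤ (a+t)^(k+1) := by rw [← hk]; exact hφupow0 x
    have htri : |(1/2) * p^2 * E + p * q * D + (1/2) * (a+t)^(k+1) * q^2 + (1/2) * t^2|
        ≤ (1/2) * p^2 * |E| + |p| * |q| * |D|
          + (1/2) * (a+t)^(k+1) * q^2 + (1/2) * t^2 := by
      have a1 := abs_add_le ((1/2) * p^2 * E + p * q * D + (1/2) * (a+t)^(k+1) * q^2)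
        ((1/2) * t^2)
      have a2 := abs_add_le ((1/2) * p^2 * E + p * q * D) ((1/2) * (a+t)^(k+1) * q^2)
      have a3 := abs_add_le ((1/2) * p^2 * E) (p * q * D)
      have e1 : |(1/2) * p^2 * E| = (1/2) * p^2 * |E| := by
        rw [abs_mul, abs_of_nonneg (by positivity : (0:ℝ) ≤ (1/2) * p^2)]
      have e2 : |p * q * D| = |p| * |q| * |D| := by rw [abs_mul, abs_mul]
      have e3 : |(1/2) * (a+t)^(k+1) * q^2| = (1/2) * (a+t)^(k+1) * q^2 :=
        abs_of_nonneg (mul_nonneg (mul_nonneg (by norm_num) hpow0) (sq_nonneg q))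
      have e4 : |(1/2) * t^2| = (1/2) * t^2 := abs_of_nonneg (by positivity)
      rw [e1, e2] at a3
      rw [e3] at a2
      rw [e4] at a1
      linarith [a1, a2, a3]
    refine htri.trans ?_
    have hb1 : (1/2) * p^2 * |E| ≤ (1/2) * (M^2 * ((2*(n:ℝ))^2 * K * t^2)) := by
      have h := mul_le_mul hpsq hE' (abs_nonneg _) (sq_nonneg M)
      linarith [h]

    have hb2 : |p| * |q| * |D| ≤ (n:ℝ)*K*M * (q^2 + t^2) := by
      have h1 : |p| * |q| * |D| ≤ (M * |q|) * (2*(n:ℝ) * K * |t|) := by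
        refine mul_le_mul ?_ hD' (abs_nonneg _) (mul_nonneg hM0 (abs_nonneg q))
        exact mul_le_mul_of_nonneg_right (hφ' x) (abs_nonneg q)
      have h2 : 2 * (|q| * |t|) ≤ q^2 + t^2 := by
        have h := two_mul_le_add_sq |q| |t|
        have e1 : |q|^2 = q^2 := sq_abs q
        have e2 : |t|^2 = t^2 := sq_abs t
        linarith [h, e1, e2]
      have h3 : (0:ℝ) ≤ (n:ℝ)*K*M :=
        mul_nonneg (mul_nonneg (Nat.cast_nonneg n) hK0) hM0
      have h4 := mul_le_mul_of_nonneg_left h2 h3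
      linarith [h1, h4]
    have hb3 : (1/2) * (a+t)^(k+1) * q^2 ≤ (1/2) * K * q^2 := by
      linarith [mul_le_mul_of_nonneg_right hpowub (sq_nonneg q)]
    have g1 : (0:ℝ) ≤ (n:ℝ)^2*K*M^2*t^2 := by positivity
    have g2 : (0:ℝ) ≤ (n:ℝ)^2*K*M^2*q^2 := by positivity
    have g3 : (0:ℝ) ≤ (n:ℝ)*M*K*t^2 := by positivity
    have g4 : (0:ℝ) ≤ (n:ℝ)*M*K*q^2 := by positivity
    have g5 : (0:ℝ) ≤ K*t^2 := by positivity
    have g6 : (0:ℝ) ≤ K*q^2 := by positivity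
    rw [hC0def]
    linarith [hb1, hb2, hb3, sq_nonneg t, sq_nonneg q, g1, g2, g3, g4, g5, g6]

  -- reduce the hypothesis hN to integrals of explicit integrands
  have hderiv_add : ∀ x, deriv (fun y => φ y + u y) x = deriv φ x + deriv u x :=
    fun x => deriv_add (hφd x) (hu x)
  have e1 : genMomentum n (fun x => φ x + u x)
      = ∫ x : ℝ, ((1/2) * (φ x + u x)^(2*n) * (deriv φ x + deriv u x)^2
          + (1/2) * (φ x + u x - 1)^2) := by
    unfold genMomentum
    refine integral_congr_ae (Eventually.of_forall fun x => ?_)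
    beta_reduce
    rw [hderiv_add x]
  have e2 : genMomentum n φ
      = ∫ x : ℝ, ((1/2) * φ x ^ (2*n) * (deriv φ x)^2 + (1/2) * (φ x - 1)^2) := rfl
  rw [e1, e2] at hN
  have hsub : (∫ x : ℝ, (((1/2) * (φ x + u x)^(2*n) * (deriv φ x + deriv u x)^2
      + (1/2) * (φ x + u x - 1)^2)
      - ((1/2) * φ x ^ (2*n) * (deriv φ x)^2 + (1/2) * (φ x - 1)^2))) = 0 := by
    rw [integral_sub hF_int hG_int, hN, sub_self]
  have hsplit : (∫ x : ℝ, (((1/2) * (φ x + u x)^(2*n) * (deriv φ x + deriv u x)^2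
      + (1/2) * (φ x + u x - 1)^2)
      - ((1/2) * φ x ^ (2*n) * (deriv φ x)^2 + (1/2) * (φ x - 1)^2)))
      = (∫ x : ℝ, (((n:ℝ) * φ x ^ (2*n-1) * (deriv φ x)^2 + (φ x - 1)) * u x
          + φ x ^ (2*n) * deriv φ x * deriv u x))
        + ∫ x : ℝ, (((1/2) * (φ x + u x)^(2*n) * (deriv φ x + deriv u x)^2
          + (1/2) * (φ x + u x - 1)^2)
          - ((1/2) * φ x ^ (2*n) * (deriv φ x)^2 + (1/2) * (φ x - 1)^2)
          - (((n:ℝ) * φ x ^ (2*n-1) * (deriv φ x)^2 + (φ x - 1)) * u x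
              + φ x ^ (2*n) * deriv φ x * deriv u x)) := by
    rw [← integral_add hl_int hr_int]
    refine integral_congr_ae (Eventually.of_forall fun x => ?_)
    ring
  have hkey : (∫ x : ℝ, (((n:ℝ) * φ x ^ (2*n-1) * (deriv φ x)^2 + (φ x - 1)) * u x
      + φ x ^ (2*n) * deriv φ x * deriv u x))
      = - ∫ x : ℝ, (((1/2) * (φ x + u x)^(2*n) * (deriv φ x + deriv u x)^2
          + (1/2) * (φ x + u x - 1)^2)
          - ((1/2) * φ x ^ (2*n) * (deriv φ x)^2 + (1/2) * (φ x - 1)^2)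
          - (((n:ℝ) * φ x ^ (2*n-1) * (deriv φ x)^2 + (φ x - 1)) * u x
              + φ x ^ (2*n) * deriv φ x * deriv u x)) := by
    rw [hsplit] at hsub
    linarith
  rw [hnorm, hkey, abs_neg]
  calc |∫ x : ℝ, (((1/2) * (φ x + u x)^(2*n) * (deriv φ x + deriv u x)^2
          + (1/2) * (φ x + u x - 1)^2)
          - ((1/2) * φ x ^ (2*n) * (deriv φ x)^2 + (1/2) * (φ x - 1)^2)
          - (((n:ℝ) * φ x ^ (2*n-1) * (deriv φ x)^2 + (φ x - 1)) * u x
              + φ x ^ (2*n) * deriv φ x * deriv u x))|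
      ≤ ∫ x : ℝ, |((1/2) * (φ x + u x)^(2*n) * (deriv φ x + deriv u x)^2
          + (1/2) * (φ x + u x - 1)^2)
          - ((1/2) * φ x ^ (2*n) * (deriv φ x)^2 + (1/2) * (φ x - 1)^2)
          - (((n:ℝ) * φ x ^ (2*n-1) * (deriv φ x)^2 + (φ x - 1)) * u x
              + φ x ^ (2*n) * deriv φ x * deriv u x)| := by
        exact norm_integral_le_integral_norm (μ := volume)
          (fun x : ℝ => ((1/2) * (φ x + u x)^(2*n) * (deriv φ x + deriv u x)^2
          + (1/2) * (φ x + u x - 1)^2)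
          - ((1/2) * φ x ^ (2*n) * (deriv φ x)^2 + (1/2) * (φ x - 1)^2)
          - (((n:ℝ) * φ x ^ (2*n-1) * (deriv φ x)^2 + (φ x - 1)) * u x
              + φ x ^ (2*n) * deriv φ x * deriv u x))
    _ ≤ ∫ x : ℝ, C0 * ((u x)^2 + (deriv u x)^2) := by
        refine integral_mono hr_int.abs ((hu2.add hu2').const_mul C0) ?_
        intro x
        exact hrbound x
    _ = C0 * H1normSq u := by
        rw [integral_const_mul, integral_add hu2 hu2']
        rfl
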